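/- Let $T$ be a banded semi-infinite matrix with two superdiagonals and three subdiagonals and nonvanishing extreme diagonals ($T_{n+3,n} \cdot T_{n,n+2} \neq 0$). Let $Q_{n,N}$ and $R_{n,N}$ be the determinantal polynomials built from the left recursion polynomials $A_n^a$ ($a \in \{1,2,3\}$) and right recursion polynomials $B_n^b$ ($b \in \{1,2\}$), respectively, and let $P_N$ denote the characteristic polynomial of $T^{[N-1]}$, with $\alpha_N = T_{3,0}\cdots T_{N+2,N-1}$ and $\beta_N = (-1)^N T_{0,2}\cdots T_{N-1,N+1}$. Then the generalized Christoffel–Darboux formula holds: for $x \neq y$, $\sum_{n=0}^{N} Q_{n,N}(x) R_{n,N}(y) = \frac{1}{\alpha_N \beta_N} \cdot \frac{P_{N+1}(x) P_N(y) - P_N(x) P_{N+1}(y)}{x - y}$. -/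

import Mathlib

open Finset Matrix Equiv

private lemma rotVal (s k : ℕ) (i : Fin s) :
    ((((finRotate s) ^ k) i : Fin s) : ℕ) = ((i : ℕ) + k) % s := by
  cases s with
  | zero => exact i.elim0
  | succ s' =>
    induction k generalizing i with
    | zero => simp [Nat.mod_eq_of_lt i.isLt]
    | succ k ih =>
      have h1 : ((finRotate (s'+1)) ^ (k+1)) i = ((finRotate (s'+1)) ^ k) (finRotate (s'+1) i) := by
        rw [pow_succ]; rfl
      rw [h1, ih, finRotate_succ_apply, Fin.val_add]
      have h2 : ((1 : Fin (s'+1)) : ℕ) = 1 % (s'+1) := rfl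
      rw [h2]
      have h3 : ((i : ℕ) + 1 % (s'+1)) % (s'+1) + k ≡ ((i:ℕ) + 1 % (s'+1)) + k [MOD s'+1] :=
        Nat.ModEq.add_right k (Nat.mod_modEq _ _)
      have h4 : ((i : ℕ) + 1 % (s'+1)) + k ≡ ((i:ℕ) + 1) + k [MOD s'+1] :=
        Nat.ModEq.add_right k (Nat.ModEq.add_left _ (Nat.mod_modEq 1 (s'+1)))
      calc (((i : ℕ) + 1 % (s'+1)) % (s'+1) + k) % (s'+1)
          = (((i:ℕ) + 1) + k) % (s'+1) := h3.trans h4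
        _ = ((i:ℕ) + (k+1)) % (s'+1) := by ring_nf

private lemma sum_delta_left {n : ℕ} (p : Fin n) (f : Fin n → ℝ) :
    ∑ k : Fin n, (if (p : ℕ) = (k : ℕ) then (1:ℝ) else 0) * f k = f p := by
  rw [Finset.sum_eq_single p]
  · simp
  · intro k _ hk
    rw [if_neg (fun h => hk (Fin.ext h.symm))]
    simp
  · simp

private lemma sum_delta_right {n : ℕ} (c : ℕ) (hc : c < n) (f : Fin n → ℝ) :
    ∑ k : Fin n, f k * (if (k : ℕ) = c then (1:ℝ) else 0) = f ⟨c, hc⟩ := by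
  rw [Finset.sum_eq_single (⟨c, hc⟩ : Fin n)]
  · simp
  · intro k _ hk
    rw [if_neg (fun h => hk (Fin.ext h))]
    simp
  · simp

private lemma PA_aux (T : ℕ → ℕ → ℝ) (A : Fin 3 → ℕ → ℝ → ℝ) (x : ℝ) (M : ℕ)
    (hband3 : ∀ i j : ℕ, j + 3 < i → T i j = 0)
    (hker : ∀ (a : Fin 3) (n : ℕ), n < M →
      ∑ i ∈ Finset.range (M+3), A a i x * ((if i = n then x else 0) - T i n) = 0)
    (h00 : A 0 0 x = 1) (h10 : A 1 0 x = 0) (h11 : A 1 1 x = 1)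
    (h20 : A 2 0 x = 0) (h21 : A 2 1 x = 0) (h22 : A 2 2 x = 1) :
    Matrix.det (Matrix.of fun i j : Fin M =>
        (if (i : ℕ) = (j : ℕ) then x else 0) - T i j) =
      (∏ k ∈ Finset.range M, T (k+3) k) *
      Matrix.det !![A 0 M x, A 1 M x, A 2 M x;
                    A 0 (M+1) x, A 1 (M+1) x, A 2 (M+1) x;
                    A 0 (M+2) x, A 1 (M+2) x, A 2 (M+2) x] := by
  classical
  set Pm : Matrix (Fin M) (Fin M) ℝ :=
    Matrix.of fun i j : Fin M => (if (i : ℕ) = (j : ℕ) then x else 0) - T i j with hPm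
  set Vt : Matrix (Fin (M+3)) (Fin (M+3)) ℝ :=
    Matrix.of fun i j => if h : (i : ℕ) < 3 then A ⟨(i:ℕ), h⟩ (j:ℕ) x
      else (if (i:ℕ) = (j:ℕ) then (1:ℝ) else 0) with hVt
  set Kc : Matrix (Fin (M+3)) (Fin (M+3)) ℝ :=
    Matrix.of fun i j => if (j:ℕ) < M then ((if (i:ℕ) = (j:ℕ) then x else 0) - T i j)
      else (if (i:ℕ) = (j:ℕ) then (1:ℝ) else 0) with hKc
  have hVtlt : ∀ (p : Fin (M+3)) (a : Fin 3), (p:ℕ) = (a:ℕ) → ∀ q : Fin (M+3),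
      Vt p q = A a (q:ℕ) x := by
    intro p a hpa q
    show (if h : (p : ℕ) < 3 then A ⟨(p:ℕ), h⟩ (q:ℕ) x else _) = _
    rw [dif_pos (hpa ▸ a.isLt)]
    congr 1
    exact Fin.ext hpa
  have hVtge : ∀ (p : Fin (M+3)), 3 ≤ (p:ℕ) → ∀ q : Fin (M+3),
      Vt p q = (if (p:ℕ) = (q:ℕ) then (1:ℝ) else 0) := by
    intro p hp q
    show (if h : (p : ℕ) < 3 then A ⟨(p:ℕ), h⟩ (q:ℕ) x else _) = _
    rw [dif_neg (by omega)]
  -- equivalences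
  let e3 : Fin 3 ⊕ Fin M ≃ Fin (M+3) := finSumFinEquiv.trans (finCongr (by omega))
  let eM : Fin M ⊕ Fin 3 ≃ Fin (M+3) := finSumFinEquiv
  have e3l : ∀ a : Fin 3, ((e3 (Sum.inl a) : Fin (M+3)) : ℕ) = (a:ℕ) := by
    intro a; simp [e3]
  have e3r : ∀ r : Fin M, ((e3 (Sum.inr r) : Fin (M+3)) : ℕ) = 3 + (r:ℕ) := by
    intro r; simp [e3]; omega
  have eMl : ∀ r : Fin M, ((eM (Sum.inl r) : Fin (M+3)) : ℕ) = (r:ℕ) := by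
    intro r; simp [eM]
  have eMr : ∀ a : Fin 3, ((eM (Sum.inr a) : Fin (M+3)) : ℕ) = M + (a:ℕ) := by
    intro a; simp [eM]
  -- det Vt = 1
  have hdVt : Vt.det = 1 := by
    have hsub : Vt.submatrix e3 e3 =
        Matrix.fromBlocks (Matrix.of fun a b : Fin 3 => A a (b:ℕ) x)
          (Matrix.of fun (a : Fin 3) (r : Fin M) => A a (3+(r:ℕ)) x) 0 1 := by
      ext i j
      cases i with
      | inl a =>
        cases j with
        | inl b =>
          rw [Matrix.submatrix_apply, hVtlt _ a (e3l a), e3l b]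
          rfl
        | inr r =>
          rw [Matrix.submatrix_apply, hVtlt _ a (e3l a), e3r r]
          rfl
      | inr r =>
        cases j with
        | inl b =>
          rw [Matrix.submatrix_apply, hVtge _ (by rw [e3r]; omega),
            if_neg (by rw [e3r r, e3l b]; omega)]
          rfl
        | inr s =>
          rw [Matrix.submatrix_apply, hVtge _ (by rw [e3r]; omega)]
          by_cases h : r = s
          · subst h
            rw [if_pos rfl, Matrix.fromBlocks_apply₂₂, Matrix.one_apply_eq]
          · rw [if_neg (by rw [e3r r, e3r s]; exact fun hh => h (Fin.ext (by omega))),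
              Matrix.fromBlocks_apply₂₂, Matrix.one_apply_ne h]
    have := Matrix.det_submatrix_equiv_self e3 Vt
    rw [← this, hsub, Matrix.det_fromBlocks_zero₂₁, Matrix.det_one, mul_one]
    rw [Matrix.det_fin_three]
    simp only [Matrix.of_apply, Fin.val_zero, Fin.val_one, Fin.val_two]
    rw [h00, h10, h11, h20, h21, h22]
    ring
  -- det Kc = det Pm
  have hdKc : Kc.det = Pm.det := by
    have hsub : Kc.submatrix eM eM =
        Matrix.fromBlocks Pm 0
          (Matrix.of fun (r : Fin 3) (j : Fin M) =>
            (if M+(r:ℕ) = (j:ℕ) then x else 0) - T (M+(r:ℕ)) (j:ℕ)) 1 := by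
      ext i j
      cases i with
      | inl i' =>
        cases j with
        | inl j' =>
          rw [Matrix.submatrix_apply]
          show (if _ then _ else _) = _
          rw [eMl i', eMl j', if_pos j'.isLt]
          rfl
        | inr s =>
          rw [Matrix.submatrix_apply]
          show (if _ then _ else _) = _
          rw [eMl i', eMr s, if_neg (by omega), if_neg (by have := i'.isLt; omega)]
          rfl
      | inr r =>
        cases j with
        | inl j' =>
          rw [Matrix.submatrix_apply]
          show (if _ then _ else _) = _
          rw [eMr r, eMl j', if_pos j'.isLt]
          rfl
        | inr s =>
          rw [Matrix.submatrix_apply]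
          show (if _ then _ else _) = _
          rw [eMr r, eMr s, if_neg (by omega)]
          by_cases h : r = s
          · subst h; rw [if_pos rfl, Matrix.fromBlocks_apply₂₂, Matrix.one_apply_eq]
          · rw [if_neg (fun hh => h (Fin.ext (by omega))),
              Matrix.fromBlocks_apply₂₂, Matrix.one_apply_ne h]
    have := Matrix.det_submatrix_equiv_self eM Kc
    rw [← this, hsub, Matrix.det_fromBlocks_zero₁₂, Matrix.det_one, mul_one]
  -- the rotated product matrix
  set σ : Equiv.Perm (Fin (M+3)) := (finRotate (M+3))^3 with hσdef
  have hσ : ∀ i : Fin (M+3), ((σ i : Fin (M+3)) : ℕ) = ((i:ℕ)+3) % (M+3) := fun i => rotVal (M+3) 3 i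
  set Cm : Matrix (Fin M) (Fin M) ℝ :=
    Matrix.of fun r j : Fin M => (if (r:ℕ)+3 = (j:ℕ) then x else 0) - T ((r:ℕ)+3) (j:ℕ) with hCm
  set Ab : Matrix (Fin 3) (Fin 3) ℝ :=
    Matrix.of fun a s : Fin 3 => A a (M+(s:ℕ)) x with hAb
  set Dm : Matrix (Fin M) (Fin 3) ℝ :=
    Matrix.of fun (r : Fin M) (s : Fin 3) => if ((r:ℕ)+3 = M+(s:ℕ)) then (1:ℝ) else 0 with hDm
  have hsubG : ((Vt * Kc).submatrix σ id).submatrix eM eM = Matrix.fromBlocks Cm Dm 0 Ab := by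
    ext i j
    cases i with
    | inl r =>
      have hp : ((σ (eM (Sum.inl r)) : Fin (M+3)) : ℕ) = (r:ℕ) + 3 := by
        rw [hσ, eMl]; exact Nat.mod_eq_of_lt (by omega)
      have hrow : ∀ q : Fin (M+3), (Vt * Kc) (σ (eM (Sum.inl r))) q = Kc (σ (eM (Sum.inl r))) q := by
        intro q
        rw [Matrix.mul_apply]
        have : ∀ k : Fin (M+3), Vt (σ (eM (Sum.inl r))) k * Kc k q
            = (if ((σ (eM (Sum.inl r)) : Fin (M+3)):ℕ) = (k:ℕ) then (1:ℝ) else 0) * Kc k q := by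
          intro k; rw [hVtge _ (by omega)]
        rw [Finset.sum_congr rfl (fun k _ => this k), sum_delta_left]
      cases j with
      | inl j' =>
        simp only [Matrix.submatrix_apply, id_eq]
        rw [hrow]
        show (if _ then _ else _) = _
        rw [eMl j', if_pos j'.isLt, hp]
        rfl
      | inr s =>
        simp only [Matrix.submatrix_apply, id_eq]
        rw [hrow]
        show (if _ then _ else _) = _
        rw [eMr s, if_neg (by omega), hp]
        rfl
    | inr a =>
      have hp : ((σ (eM (Sum.inr a)) : Fin (M+3)) : ℕ) = (a:ℕ) := by
        rw [hσ, eMr]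
        have h1 : (M + (a:ℕ) + 3) = (a:ℕ) + (M+3) := by omega
        rw [h1, Nat.add_mod_right]
        exact Nat.mod_eq_of_lt (by omega)
      have hrow : ∀ q : Fin (M+3), Vt (σ (eM (Sum.inr a))) q = A a (q:ℕ) x :=
        hVtlt _ a hp
      cases j with
      | inl j' =>
        simp only [Matrix.submatrix_apply, id_eq]
        rw [Matrix.mul_apply]
        have hterm : ∀ k : Fin (M+3), Vt (σ (eM (Sum.inr a))) k * Kc k (eM (Sum.inl j'))
            = A a (k:ℕ) x * ((if (k:ℕ) = (j':ℕ) then x else 0) - T (k:ℕ) (j':ℕ)) := by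
          intro k
          rw [hrow k]
          congr 1
          show (if _ then _ else _) = _
          rw [eMl j', if_pos j'.isLt]
        rw [Finset.sum_congr rfl (fun k _ => hterm k)]
        have := Fin.sum_univ_eq_sum_range
          (fun i : ℕ => A a i x * ((if i = (j':ℕ) then x else 0) - T i (j':ℕ))) (M+3)
        rw [this, hker a (j':ℕ) j'.isLt]
        rfl
      | inr s =>
        simp only [Matrix.submatrix_apply, id_eq]
        rw [Matrix.mul_apply]
        have hterm : ∀ k : Fin (M+3), Vt (σ (eM (Sum.inr a))) k * Kc k (eM (Sum.inr s))
            = A a (k:ℕ) x * (if (k:ℕ) = M+(s:ℕ) then (1:ℝ) else 0) := by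
          intro k
          rw [hrow k]
          congr 1
          show (if _ then _ else _) = _
          rw [eMr s, if_neg (by omega)]
        rw [Finset.sum_congr rfl (fun k _ => hterm k),
          sum_delta_right (M+(s:ℕ)) (by omega) (fun k : Fin (M+3) => A a (k:ℕ) x)]
        rfl
  -- determinant of Cm
  have hdCm : Cm.det = (-1:ℝ)^M * ∏ k ∈ Finset.range M, T (k+3) k := by
    have htri : Cm.BlockTriangular id := by
      intro i j hij
      have hij' : (j:ℕ) < (i:ℕ) := hij
      show (if (i:ℕ)+3 = (j:ℕ) then x else 0) - T ((i:ℕ)+3) (j:ℕ) = 0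
      rw [if_neg (by omega), hband3 _ _ (by omega)]
      ring
    rw [Matrix.det_of_upperTriangular htri]
    have : ∀ i : Fin M, Cm i i = - T ((i:ℕ)+3) (i:ℕ) := by
      intro i
      show (if (i:ℕ)+3 = (i:ℕ) then x else 0) - T ((i:ℕ)+3) (i:ℕ) = - T ((i:ℕ)+3) (i:ℕ)
      rw [if_neg (by omega)]
      ring
    rw [Finset.prod_congr rfl (fun i _ => this i)]
    have h2 := Fin.prod_univ_eq_prod_range (fun k : ℕ => - T (k+3) k) M
    rw [h2]
    rw [show (fun k : ℕ => - T (k+3) k) = (fun k : ℕ => (-1) * T (k+3) k) from funext (fun k => by ring)]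
    rw [Finset.prod_mul_distrib, Finset.prod_const, Finset.card_range]
  -- sign of σ
  have hsign : ((Equiv.Perm.sign σ : ℤ) : ℝ) = ((-1:ℝ)^(M+2))^3 := by
    have h1 : Equiv.Perm.sign σ = (Equiv.Perm.sign (finRotate (M+3)))^3 := by
      rw [hσdef, map_pow]
    have h2 : Equiv.Perm.sign (finRotate (M+3)) = (-1)^(M+2) := by
      rw [sign_finRotate, show M + 3 - 1 = M + 2 by omega]
    rw [h1, h2]
    push_cast
    norm_num
  -- assemble
  have hperm := Matrix.det_permute σ (Vt * Kc)
  have hGdet : Cm.det * Ab.det = ((Equiv.Perm.sign σ : ℤ) : ℝ) * (Vt.det * Kc.det) := by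
    have h1 : ((Vt * Kc).submatrix σ id).det = Cm.det * Ab.det := by
      rw [← Matrix.det_submatrix_equiv_self eM ((Vt * Kc).submatrix σ id), hsubG,
        Matrix.det_fromBlocks_zero₂₁]
    rw [← h1, ← Matrix.det_mul]
    exact_mod_cast hperm
  rw [hdVt, hdKc, one_mul] at hGdet
  have hAbdet : Ab.det = Matrix.det !![A 0 M x, A 1 M x, A 2 M x;
                    A 0 (M+1) x, A 1 (M+1) x, A 2 (M+1) x;
                    A 0 (M+2) x, A 1 (M+2) x, A 2 (M+2) x] := by
    rw [Matrix.det_fin_three, Matrix.det_fin_three]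
    simp only [hAb, Matrix.of_apply, Fin.isValue, Fin.val_zero, Fin.val_one, Fin.val_two,
      add_zero, Matrix.cons_val', Matrix.cons_val_zero, Matrix.cons_val_one, Matrix.head_cons,
      Matrix.empty_val', Matrix.cons_val_fin_one, Matrix.head_fin_const,
      Matrix.cons_val_two, Matrix.tail_cons]
    ring
  -- P = sign * Cm.det * Ab.det
  have hfinal : Pm.det = ((Equiv.Perm.sign σ : ℤ) : ℝ) * Cm.det * Ab.det := by
    have hs2 : ((Equiv.Perm.sign σ : ℤ) : ℝ) * ((Equiv.Perm.sign σ : ℤ) : ℝ) = 1 := by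
      rw [hsign]
      rcases Nat.even_or_odd M with h | h
      · have : Even (M+2) := h.add (by norm_num)
        rw [this.neg_one_pow]; norm_num
      · have : Odd (M+2) := h.add_even (by norm_num)
        rw [this.neg_one_pow]; norm_num
    calc Pm.det = (((Equiv.Perm.sign σ : ℤ) : ℝ) * ((Equiv.Perm.sign σ : ℤ) : ℝ)) * Pm.det := by
          rw [hs2, one_mul]
      _ = ((Equiv.Perm.sign σ : ℤ) : ℝ) * (((Equiv.Perm.sign σ : ℤ) : ℝ) * Pm.det) := by ring
      _ = ((Equiv.Perm.sign σ : ℤ) : ℝ) * (Cm.det * Ab.det) := by rw [← hGdet]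
      _ = ((Equiv.Perm.sign σ : ℤ) : ℝ) * Cm.det * Ab.det := by ring
  have hcoef : ((-1:ℝ)^(M+2))^3 * ((-1:ℝ)^M * ∏ k ∈ Finset.range M, T (k+3) k)
      = ∏ k ∈ Finset.range M, T (k+3) k := by
    rcases Nat.even_or_odd M with h | h
    · have h1 : Even (M+2) := by
        rcases h with ⟨t, ht⟩; exact ⟨t+1, by omega⟩
      rw [h1.neg_one_pow, h.neg_one_pow]; norm_num
    · have h1 : Odd (M+2) := h.add_even (by norm_num)
      rw [h1.neg_one_pow, h.neg_one_pow]; norm_num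
  rw [hfinal, hsign, hdCm, hAbdet]
  linear_combination Matrix.det !![A 0 M x, A 1 M x, A 2 M x;
                    A 0 (M+1) x, A 1 (M+1) x, A 2 (M+1) x;
                    A 0 (M+2) x, A 1 (M+2) x, A 2 (M+2) x] * hcoef
private lemma PB_aux (T : ℕ → ℕ → ℝ) (B : Fin 2 → ℕ → ℝ → ℝ) (y : ℝ) (M : ℕ)
    (hband2 : ∀ i j : ℕ, i + 2 < j → T i j = 0)
    (hker : ∀ (b : Fin 2) (n : ℕ), n < M →
      ∑ j ∈ Finset.range (M+2), ((if n = j then y else 0) - T n j) * B b j y = 0)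
    (h00 : B 0 0 y = 1) (h10 : B 1 0 y = 0) (h11 : B 1 1 y = 1) :
    Matrix.det (Matrix.of fun i j : Fin M =>
        (if (i : ℕ) = (j : ℕ) then y else 0) - T i j) =
      ((-1:ℝ)^M * ∏ k ∈ Finset.range M, T k (k+2)) *
      Matrix.det !![B 0 M y, B 1 M y; B 0 (M+1) y, B 1 (M+1) y] := by
  classical
  set Pm : Matrix (Fin M) (Fin M) ℝ :=
    Matrix.of fun i j : Fin M => (if (i : ℕ) = (j : ℕ) then y else 0) - T i j with hPm
  set Kp : Matrix (Fin (M+2)) (Fin (M+2)) ℝ :=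
    Matrix.of fun i j => if (i:ℕ) < M then ((if (i:ℕ) = (j:ℕ) then y else 0) - T i j)
      else (if (i:ℕ) = (j:ℕ) then (1:ℝ) else 0) with hKp
  set Vp : Matrix (Fin (M+2)) (Fin (M+2)) ℝ :=
    Matrix.of fun i j => if h : (j : ℕ) < 2 then B ⟨(j:ℕ), h⟩ (i:ℕ) y
      else (if (i:ℕ) = (j:ℕ) then (1:ℝ) else 0) with hVp
  have hVplt : ∀ (q : Fin (M+2)) (b : Fin 2), (q:ℕ) = (b:ℕ) → ∀ p : Fin (M+2),
      Vp p q = B b (p:ℕ) y := by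
    intro q b hqb p
    show (if h : (q : ℕ) < 2 then B ⟨(q:ℕ), h⟩ (p:ℕ) y else _) = _
    rw [dif_pos (hqb ▸ b.isLt)]
    congr 1
    exact Fin.ext hqb
  have hVpge : ∀ (q : Fin (M+2)), 2 ≤ (q:ℕ) → ∀ p : Fin (M+2),
      Vp p q = (if (p:ℕ) = (q:ℕ) then (1:ℝ) else 0) := by
    intro q hq p
    show (if h : (q : ℕ) < 2 then B ⟨(q:ℕ), h⟩ (p:ℕ) y else _) = _
    rw [dif_neg (by omega)]
  let eM2 : Fin M ⊕ Fin 2 ≃ Fin (M+2) := finSumFinEquiv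
  let e2M : Fin 2 ⊕ Fin M ≃ Fin (M+2) := finSumFinEquiv.trans (finCongr (by omega))
  have eMl : ∀ r : Fin M, ((eM2 (Sum.inl r) : Fin (M+2)) : ℕ) = (r:ℕ) := by
    intro r; simp [eM2]
  have eMr : ∀ b : Fin 2, ((eM2 (Sum.inr b) : Fin (M+2)) : ℕ) = M + (b:ℕ) := by
    intro b; simp [eM2]
  have e2l : ∀ b : Fin 2, ((e2M (Sum.inl b) : Fin (M+2)) : ℕ) = (b:ℕ) := by
    intro b; simp [e2M]
  have e2r : ∀ r : Fin M, ((e2M (Sum.inr r) : Fin (M+2)) : ℕ) = 2 + (r:ℕ) := by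
    intro r; simp [e2M]; omega
  -- det Kp = det Pm
  have hdKp : Kp.det = Pm.det := by
    have hsub : Kp.submatrix eM2 eM2 =
        Matrix.fromBlocks Pm
          (Matrix.of fun (i : Fin M) (s : Fin 2) =>
            (if (i:ℕ) = M+(s:ℕ) then y else 0) - T (i:ℕ) (M+(s:ℕ))) 0 1 := by
      ext i j
      cases i with
      | inl i' =>
        cases j with
        | inl j' =>
          rw [Matrix.submatrix_apply]
          show (if _ then _ else _) = _
          rw [eMl i', eMl j', if_pos i'.isLt]
          rfl
        | inr s =>
          rw [Matrix.submatrix_apply]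
          show (if _ then _ else _) = _
          rw [eMl i', eMr s, if_pos i'.isLt]
          rfl
      | inr b =>
        cases j with
        | inl j' =>
          rw [Matrix.submatrix_apply]
          show (if _ then _ else _) = _
          rw [eMr b, eMl j', if_neg (by omega), if_neg (by have := j'.isLt; omega)]
          rfl
        | inr s =>
          rw [Matrix.submatrix_apply]
          show (if _ then _ else _) = _
          rw [eMr b, eMr s, if_neg (by omega)]
          by_cases h : b = s
          · subst h; rw [if_pos rfl, Matrix.fromBlocks_apply₂₂, Matrix.one_apply_eq]
          · rw [if_neg (fun hh => h (Fin.ext (by omega))),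
              Matrix.fromBlocks_apply₂₂, Matrix.one_apply_ne h]
    have := Matrix.det_submatrix_equiv_self eM2 Kp
    rw [← this, hsub, Matrix.det_fromBlocks_zero₂₁, Matrix.det_one, mul_one]
  -- det Vp = 1
  have hdVp : Vp.det = 1 := by
    have hsub : Vp.submatrix e2M e2M =
        Matrix.fromBlocks (Matrix.of fun i b : Fin 2 => B b (i:ℕ) y) 0
          (Matrix.of fun (r : Fin M) (b : Fin 2) => B b (2+(r:ℕ)) y) 1 := by
      ext i j
      cases i with
      | inl i' =>
        cases j with
        | inl b =>
          rw [Matrix.submatrix_apply, hVplt _ b (e2l b), e2l i']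
          rfl
        | inr r =>
          rw [Matrix.submatrix_apply, hVpge _ (by rw [e2r]; omega),
            if_neg (by rw [e2l i', e2r r]; omega)]
          rfl
      | inr r =>
        cases j with
        | inl b =>
          rw [Matrix.submatrix_apply, hVplt _ b (e2l b), e2r r]
          rfl
        | inr s =>
          rw [Matrix.submatrix_apply, hVpge _ (by rw [e2r]; omega)]
          by_cases h : r = s
          · subst h
            rw [if_pos rfl, Matrix.fromBlocks_apply₂₂, Matrix.one_apply_eq]
          · rw [if_neg (by rw [e2r r, e2r s]; exact fun hh => h (Fin.ext (by omega))),
              Matrix.fromBlocks_apply₂₂, Matrix.one_apply_ne h]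
    have := Matrix.det_submatrix_equiv_self e2M Vp
    rw [← this, hsub, Matrix.det_fromBlocks_zero₁₂, Matrix.det_one, mul_one]
    rw [Matrix.det_fin_two]
    simp only [Matrix.of_apply, Fin.val_zero, Fin.val_one]
    rw [h00, h10, h11]
    ring
  -- rotated product
  set σ : Equiv.Perm (Fin (M+2)) := (finRotate (M+2))^M with hσdef
  have hσ : ∀ i : Fin (M+2), ((σ i : Fin (M+2)) : ℕ) = ((i:ℕ)+M) % (M+2) := fun i => rotVal (M+2) M i
  set Eb : Matrix (Fin 2) (Fin 2) ℝ :=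
    Matrix.of fun i b : Fin 2 => B b (M+(i:ℕ)) y with hEb
  set Cm : Matrix (Fin M) (Fin M) ℝ :=
    Matrix.of fun r j : Fin M => (if (r:ℕ) = 2+(j:ℕ) then y else 0) - T (r:ℕ) (2+(j:ℕ)) with hCm
  set Dm : Matrix (Fin 2) (Fin M) ℝ :=
    Matrix.of fun (i : Fin 2) (r : Fin M) => if (M+(i:ℕ) = 2+(r:ℕ)) then (1:ℝ) else 0 with hDm
  have hsubG : ((Kp * Vp).submatrix σ id).submatrix e2M e2M = Matrix.fromBlocks Eb Dm 0 Cm := by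
    ext i j
    cases i with
    | inl i' =>
      have hp : ((σ (e2M (Sum.inl i')) : Fin (M+2)) : ℕ) = M + (i':ℕ) := by
        rw [hσ, e2l]
        rw [Nat.mod_eq_of_lt (by omega)]
        omega
      have hrow : ∀ q : Fin (M+2), (Kp * Vp) (σ (e2M (Sum.inl i'))) q = Vp (σ (e2M (Sum.inl i'))) q := by
        intro q
        rw [Matrix.mul_apply]
        have : ∀ k : Fin (M+2), Kp (σ (e2M (Sum.inl i'))) k * Vp k q
            = (if ((σ (e2M (Sum.inl i')) : Fin (M+2)):ℕ) = (k:ℕ) then (1:ℝ) else 0) * Vp k q := by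
          intro k
          congr 1
          show (if _ then _ else _) = _
          rw [if_neg (by omega)]
        rw [Finset.sum_congr rfl (fun k _ => this k), sum_delta_left]
      cases j with
      | inl b =>
        simp only [Matrix.submatrix_apply, id_eq]
        rw [hrow, hVplt _ b (e2l b), hp]
        rfl
      | inr s =>
        simp only [Matrix.submatrix_apply, id_eq]
        rw [hrow, hVpge _ (by rw [e2r]; omega), hp, e2r s]
        rfl
    | inr r =>
      have hp : ((σ (e2M (Sum.inr r)) : Fin (M+2)) : ℕ) = (r:ℕ) := by
        rw [hσ, e2r]
        have h1 : (2 + (r:ℕ) + M) = (r:ℕ) + (M+2) := by omega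
        rw [h1, Nat.add_mod_right]
        exact Nat.mod_eq_of_lt (by omega)
      have hKrow : ∀ k : Fin (M+2), Kp (σ (e2M (Sum.inr r))) k
          = (if (r:ℕ) = (k:ℕ) then y else 0) - T (r:ℕ) (k:ℕ) := by
        intro k
        show (if _ then _ else _) = _
        rw [hp, if_pos r.isLt]
      cases j with
      | inl b =>
        simp only [Matrix.submatrix_apply, id_eq]
        rw [Matrix.mul_apply]
        have hterm : ∀ k : Fin (M+2), Kp (σ (e2M (Sum.inr r))) k * Vp k (e2M (Sum.inl b))
            = ((if (r:ℕ) = (k:ℕ) then y else 0) - T (r:ℕ) (k:ℕ)) * B b (k:ℕ) y := by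
          intro k
          rw [hKrow k, hVplt _ b (e2l b)]
        rw [Finset.sum_congr rfl (fun k _ => hterm k)]
        have := Fin.sum_univ_eq_sum_range
          (fun j : ℕ => ((if (r:ℕ) = j then y else 0) - T (r:ℕ) j) * B b j y) (M+2)
        rw [this, hker b (r:ℕ) r.isLt]
        rfl
      | inr s =>
        simp only [Matrix.submatrix_apply, id_eq]
        rw [Matrix.mul_apply]
        have hterm : ∀ k : Fin (M+2), Kp (σ (e2M (Sum.inr r))) k * Vp k (e2M (Sum.inr s))
            = ((if (r:ℕ) = (k:ℕ) then y else 0) - T (r:ℕ) (k:ℕ))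
              * (if (k:ℕ) = 2+(s:ℕ) then (1:ℝ) else 0) := by
          intro k
          rw [hKrow k, hVpge _ (by rw [e2r]; omega), e2r s]
        rw [Finset.sum_congr rfl (fun k _ => hterm k),
          sum_delta_right (2+(s:ℕ)) (by omega)
            (fun k : Fin (M+2) => (if (r:ℕ) = (k:ℕ) then y else 0) - T (r:ℕ) (k:ℕ))]
        rfl
  -- det Cm
  have hdCm : Cm.det = (-1:ℝ)^M * ∏ k ∈ Finset.range M, T k (k+2) := by
    have htri : Cm.BlockTriangular OrderDual.toDual := by
      intro i j hij
      have hij' : (i:ℕ) < (j:ℕ) := hij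
      show (if (i:ℕ) = 2+(j:ℕ) then y else 0) - T (i:ℕ) (2+(j:ℕ)) = 0
      rw [if_neg (by omega), hband2 _ _ (by omega)]
      ring
    rw [Matrix.det_of_lowerTriangular Cm htri]
    have : ∀ i : Fin M, Cm i i = - T (i:ℕ) ((i:ℕ)+2) := by
      intro i
      show (if (i:ℕ) = 2+(i:ℕ) then y else 0) - T (i:ℕ) (2+(i:ℕ)) = - T (i:ℕ) ((i:ℕ)+2)
      rw [if_neg (by omega), Nat.add_comm 2 (i:ℕ)]
      ring
    rw [Finset.prod_congr rfl (fun i _ => this i)]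
    have h2 := Fin.prod_univ_eq_prod_range (fun k : ℕ => - T k (k+2)) M
    rw [h2]
    rw [show (fun k : ℕ => - T k (k+2)) = (fun k : ℕ => (-1) * T k (k+2)) from funext (fun k => by ring)]
    rw [Finset.prod_mul_distrib, Finset.prod_const, Finset.card_range]
  -- sign of σ is 1
  have hsign : ((Equiv.Perm.sign σ : ℤ) : ℝ) = 1 := by
    have h1 : Equiv.Perm.sign σ = (Equiv.Perm.sign (finRotate (M+2)))^M := by
      rw [hσdef, map_pow]
    have h2 : Equiv.Perm.sign (finRotate (M+2)) = (-1)^(M+1) := by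
      rw [sign_finRotate, show M + 2 - 1 = M + 1 by omega]
    rw [h1, h2]
    push_cast
    rw [← pow_mul]
    rcases Nat.even_or_odd M with h | h
    · have : Even ((M+1) * M) := h.mul_left (M+1)
      rw [this.neg_one_pow]
    · have he : Even (M+1) := by
        rcases h with ⟨t, ht⟩; exact ⟨t+1, by omega⟩
      have : Even ((M+1) * M) := he.mul_right M
      rw [this.neg_one_pow]
  -- assemble
  have hperm := Matrix.det_permute σ (Kp * Vp)
  have hGdet : Eb.det * Cm.det = ((Equiv.Perm.sign σ : ℤ) : ℝ) * (Kp.det * Vp.det) := by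
    have h1 : ((Kp * Vp).submatrix σ id).det = Eb.det * Cm.det := by
      rw [← Matrix.det_submatrix_equiv_self e2M ((Kp * Vp).submatrix σ id), hsubG,
        Matrix.det_fromBlocks_zero₂₁]
    rw [← h1, ← Matrix.det_mul]
    exact_mod_cast hperm
  rw [hdVp, hdKp, mul_one, hsign, one_mul] at hGdet
  have hEbdet : Eb.det = Matrix.det !![B 0 M y, B 1 M y; B 0 (M+1) y, B 1 (M+1) y] := by
    rw [Matrix.det_fin_two, Matrix.det_fin_two]
    simp only [hEb, Matrix.of_apply, Fin.isValue, Fin.val_zero, Fin.val_one, add_zero,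
      Matrix.cons_val', Matrix.cons_val_zero, Matrix.cons_val_one, Matrix.head_cons,
      Matrix.empty_val', Matrix.cons_val_fin_one, Matrix.head_fin_const]
    try ring
  rw [← hGdet, hdCm, hEbdet]
  ring

set_option maxHeartbeats 1000000 in
/-- Generalized Christoffel–Darboux formula for a banded matrix with two
superdiagonals and three subdiagonals. -/
theorem stmt16 (T : ℕ → ℕ → ℝ)
    (hband : ∀ i j : ℕ, (j + 3 < i ∨ i + 2 < j) → T i j = 0)
    (hext : ∀ n : ℕ, T (n+3) n ≠ 0 ∧ T n (n+2) ≠ 0)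
    (A : Fin 3 → ℕ → ℝ → ℝ) (B : Fin 2 → ℕ → ℝ → ℝ)
    (hBrec : ∀ (b : Fin 2) (n : ℕ) (x : ℝ), ∑' j : ℕ, T n j * B b j x = x * B b n x)
    (hArec : ∀ (a : Fin 3) (n : ℕ) (x : ℝ), ∑' i : ℕ, A a i x * T i n = x * A a n x)
    (hB00 : ∀ x, B 0 0 x = 1) (hB10 : ∀ x, B 1 0 x = 0) (hB11 : ∀ x, B 1 1 x = 1)
    (ξ : ℝ) (hB01 : ∀ x, B 0 1 x = ξ)
    (hA00 : ∀ x, A 0 0 x = 1) (hA10 : ∀ x, A 1 0 x = 0) (hA11 : ∀ x, A 1 1 x = 1)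
    (hA20 : ∀ x, A 2 0 x = 0) (hA21 : ∀ x, A 2 1 x = 0) (hA22 : ∀ x, A 2 2 x = 1)
    (ν11 ν12 ν22 : ℝ)
    (hA01 : ∀ x, A 0 1 x = ν11) (hA02 : ∀ x, A 0 2 x = ν12)
    (hA12 : ∀ x, A 1 2 x = ν22)
    (P : ℕ → ℝ → ℝ)
    (hP : ∀ (M : ℕ) (x : ℝ), P M x =
      Matrix.det (Matrix.of fun i j : Fin M =>
        (if (i : ℕ) = (j : ℕ) then x else 0) - T i j))
    (α β : ℕ → ℝ)
    (hα : ∀ M, α M = ∏ k ∈ Finset.range M, T (k+3) k)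
    (hβ : ∀ M, β M = (-1)^M * ∏ k ∈ Finset.range M, T k (k+2))
    (Q R : ℕ → ℕ → ℝ → ℝ)
    (hQ : ∀ n M x, Q n M x = Matrix.det
      !![A 0 n x, A 1 n x, A 2 n x;
         A 0 (M+1) x, A 1 (M+1) x, A 2 (M+1) x;
         A 0 (M+2) x, A 1 (M+2) x, A 2 (M+2) x])
    (hR : ∀ n M x, R n M x = Matrix.det
      !![B 0 n x, B 1 n x; B 0 (M+1) x, B 1 (M+1) x])
    (N : ℕ) (x y : ℝ) (hxy : x ≠ y) :
    ∑ n ∈ Finset.range (N+1), Q n N x * R n N y =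
      (1 / (α N * β N)) * ((P (N+1) x * P N y - P N x * P (N+1) y) / (x - y)) := by
  classical
  -- finite versions of the recursions
  have hAfin : ∀ (a : Fin 3) (n m : ℕ), n + 4 ≤ m →
      ∑ i ∈ Finset.range m, A a i x * T i n = x * A a n x := by
    intro a n m hm
    rw [← hArec a n x]
    refine (tsum_eq_sum ?_).symm
    intro i hi
    rw [Finset.mem_range, not_lt] at hi
    rw [hband i n (Or.inl (by omega)), mul_zero]
  have hBfin : ∀ (b : Fin 2) (n m : ℕ), n + 3 ≤ m →
      ∑ j ∈ Finset.range m, T n j * B b j y = y * B b n y := by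
    intro b n m hm
    rw [← hBrec b n y]
    refine (tsum_eq_sum ?_).symm
    intro j hj
    rw [Finset.mem_range, not_lt] at hj
    rw [hband n j (Or.inr (by omega)), zero_mul]
  -- kernel identities
  have hkerA : ∀ (M : ℕ) (a : Fin 3) (n : ℕ), n < M →
      ∑ i ∈ Finset.range (M+3), A a i x * ((if i = n then x else 0) - T i n) = 0 := by
    intro M a n hn
    have h1 : ∑ i ∈ Finset.range (M+3), A a i x * ((if i = n then x else 0) - T i n)
        = (∑ i ∈ Finset.range (M+3), (if i = n then A a i x * x else 0))
          - ∑ i ∈ Finset.range (M+3), A a i x * T i n := by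
      rw [← Finset.sum_sub_distrib]
      refine Finset.sum_congr rfl (fun i _ => ?_)
      split <;> ring
    rw [h1, Finset.sum_ite_eq' (Finset.range (M+3)) n (fun i => A a i x * x),
      if_pos (Finset.mem_range.mpr (by omega)), hAfin a n (M+3) (by omega)]
    ring
  have hkerB : ∀ (M : ℕ) (b : Fin 2) (n : ℕ), n < M →
      ∑ j ∈ Finset.range (M+2), ((if n = j then y else 0) - T n j) * B b j y = 0 := by
    intro M b n hn
    have h1 : ∑ j ∈ Finset.range (M+2), ((if n = j then y else 0) - T n j) * B b j y
        = (∑ j ∈ Finset.range (M+2), (if n = j then y * B b j y else 0))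
          - ∑ j ∈ Finset.range (M+2), T n j * B b j y := by
      rw [← Finset.sum_sub_distrib]
      refine Finset.sum_congr rfl (fun j _ => ?_)
      split <;> ring
    rw [h1, Finset.sum_ite_eq (Finset.range (M+2)) n (fun j => y * B b j y),
      if_pos (Finset.mem_range.mpr (by omega)), hBfin b n (M+2) (by omega)]
    ring
  -- the two characteristic-determinant identities
  have hPA : ∀ M : ℕ, P M x = α M * Q M M x := by
    intro M
    rw [hP M x, hα M, hQ M M x]
    exact PA_aux T A x M (fun i j h => hband i j (Or.inl h)) (hkerA M)
      (hA00 x) (hA10 x) (hA11 x) (hA20 x) (hA21 x) (hA22 x)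
  have hPB : ∀ M : ℕ, P M y = β M * R M M y := by
    intro M
    rw [hP M y, hβ M, hR M M y]
    exact PB_aux T B y M (fun i j h => hband i j (Or.inr h)) (hkerB M)
      (hB00 y) (hB10 y) (hB11 y)
  -- linear expansions of Q and R
  have hQlin : ∀ n : ℕ, Q n N x =
      (A 1 (N+1) x * A 2 (N+2) x - A 2 (N+1) x * A 1 (N+2) x) * A 0 n x
      + (A 2 (N+1) x * A 0 (N+2) x - A 0 (N+1) x * A 2 (N+2) x) * A 1 n x
      + (A 0 (N+1) x * A 1 (N+2) x - A 1 (N+1) x * A 0 (N+2) x) * A 2 n x := by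
    intro n
    rw [hQ n N x, Matrix.det_fin_three]
    simp only [Matrix.of_apply, Matrix.cons_val', Matrix.cons_val_zero, Matrix.cons_val_one,
      Matrix.head_cons, Matrix.empty_val', Matrix.cons_val_fin_one, Matrix.head_fin_const,
      Matrix.cons_val_two, Matrix.tail_cons]
    ring
  have hRlin : ∀ n : ℕ, R n N y =
      B 1 (N+1) y * B 0 n y - B 0 (N+1) y * B 1 n y := by
    intro n
    rw [hR n N y, Matrix.det_fin_two]
    simp only [Matrix.of_apply, Matrix.cons_val', Matrix.cons_val_zero, Matrix.cons_val_one,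
      Matrix.head_cons, Matrix.empty_val', Matrix.cons_val_fin_one, Matrix.head_fin_const]
    ring
  -- recursions for Q and R
  have hQrec : ∀ n : ℕ, n ≤ N →
      ∑ i ∈ Finset.range (N+4), Q i N x * T i n = x * Q n N x := by
    intro n hn
    have h1 : ∑ i ∈ Finset.range (N+4), Q i N x * T i n
        = (A 1 (N+1) x * A 2 (N+2) x - A 2 (N+1) x * A 1 (N+2) x)
            * (∑ i ∈ Finset.range (N+4), A 0 i x * T i n)
          + (A 2 (N+1) x * A 0 (N+2) x - A 0 (N+1) x * A 2 (N+2) x)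
            * (∑ i ∈ Finset.range (N+4), A 1 i x * T i n)
          + (A 0 (N+1) x * A 1 (N+2) x - A 1 (N+1) x * A 0 (N+2) x)
            * (∑ i ∈ Finset.range (N+4), A 2 i x * T i n) := by
      rw [Finset.mul_sum, Finset.mul_sum, Finset.mul_sum, ← Finset.sum_add_distrib,
        ← Finset.sum_add_distrib]
      refine Finset.sum_congr rfl (fun i _ => ?_)
      rw [hQlin i]
      ring
    rw [h1, hAfin 0 n (N+4) (by omega), hAfin 1 n (N+4) (by omega),
      hAfin 2 n (N+4) (by omega), hQlin n]
    ring
  have hRrec : ∀ n : ℕ, n ≤ N →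
      ∑ j ∈ Finset.range (N+4), T n j * R j N y = y * R n N y := by
    intro n hn
    have h1 : ∑ j ∈ Finset.range (N+4), T n j * R j N y
        = B 1 (N+1) y * (∑ j ∈ Finset.range (N+4), T n j * B 0 j y)
          - B 0 (N+1) y * (∑ j ∈ Finset.range (N+4), T n j * B 1 j y) := by
      rw [Finset.mul_sum, Finset.mul_sum, ← Finset.sum_sub_distrib]
      refine Finset.sum_congr rfl (fun j _ => ?_)
      rw [hRlin j]
      ring
    rw [h1, hBfin 0 n (N+4) (by omega), hBfin 1 n (N+4) (by omega), hRlin n]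
    ring
  -- vanishing and symmetry of boundary determinants
  have hQz1 : Q (N+1) N x = 0 := by
    rw [hQ, Matrix.det_fin_three]
    simp only [Matrix.of_apply, Matrix.cons_val', Matrix.cons_val_zero, Matrix.cons_val_one,
      Matrix.head_cons, Matrix.empty_val', Matrix.cons_val_fin_one, Matrix.head_fin_const,
      Matrix.cons_val_two, Matrix.tail_cons]
    ring
  have hQz2 : Q (N+2) N x = 0 := by
    rw [hQ, Matrix.det_fin_three]
    simp only [Matrix.of_apply, Matrix.cons_val', Matrix.cons_val_zero, Matrix.cons_val_one,
      Matrix.head_cons, Matrix.empty_val', Matrix.cons_val_fin_one, Matrix.head_fin_const,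
      Matrix.cons_val_two, Matrix.tail_cons]
    ring
  have hRz1 : R (N+1) N y = 0 := by
    rw [hR, Matrix.det_fin_two]
    simp only [Matrix.of_apply, Matrix.cons_val', Matrix.cons_val_zero, Matrix.cons_val_one,
      Matrix.head_cons, Matrix.empty_val', Matrix.cons_val_fin_one, Matrix.head_fin_const]
    ring
  have hQ3 : Q (N+3) N x = Q (N+1) (N+1) x := by
    rw [hQ, hQ, Matrix.det_fin_three, Matrix.det_fin_three]
    simp only [Matrix.of_apply, Matrix.cons_val', Matrix.cons_val_zero, Matrix.cons_val_one,
      Matrix.head_cons, Matrix.empty_val', Matrix.cons_val_fin_one, Matrix.head_fin_const,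
      Matrix.cons_val_two, Matrix.tail_cons]
    rw [show N+1+1 = N+2 by omega, show N+1+2 = N+3 by omega]
    ring
  have hR2 : R (N+2) N y = - R (N+1) (N+1) y := by
    rw [hR, hR, Matrix.det_fin_two, Matrix.det_fin_two]
    simp only [Matrix.of_apply, Matrix.cons_val', Matrix.cons_val_zero, Matrix.cons_val_one,
      Matrix.head_cons, Matrix.empty_val', Matrix.cons_val_fin_one, Matrix.head_fin_const]
    rw [show N+1+1 = N+2 by omega]
    ring
  -- telescoping / Christoffel-Darboux kernel computation
  have hsplit : ∀ g : ℕ → ℝ, ∑ i ∈ Finset.range (N+4), g i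
      = (∑ i ∈ Finset.range (N+1), g i) + g (N+1) + g (N+2) + g (N+3) := by
    intro g
    rw [show N+4 = N+1+1+1+1 by omega, Finset.sum_range_succ, Finset.sum_range_succ,
      Finset.sum_range_succ, show N+1+1+1 = N+3 by omega, show N+1+1 = N+2 by omega]
  have key : (x - y) * (∑ n ∈ Finset.range (N+1), Q n N x * R n N y)
      = T (N+3) N * Q (N+3) N x * R N N y - T N (N+2) * Q N N x * R (N+2) N y := by
    have step1 : (x - y) * (∑ n ∈ Finset.range (N+1), Q n N x * R n N y)
        = (∑ i ∈ Finset.range (N+4), ∑ n ∈ Finset.range (N+1), Q i N x * T i n * R n N y)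
          - (∑ n ∈ Finset.range (N+1), ∑ j ∈ Finset.range (N+4), Q n N x * T n j * R j N y) := by
      have h1 : ∀ n ∈ Finset.range (N+1),
          (x - y) * (Q n N x * R n N y)
          = (∑ i ∈ Finset.range (N+4), Q i N x * T i n * R n N y)
            - (∑ j ∈ Finset.range (N+4), Q n N x * T n j * R j N y) := by
        intro n hn
        have hn' : n ≤ N := by rw [Finset.mem_range] at hn; omega
        have e1 : ∑ i ∈ Finset.range (N+4), Q i N x * T i n * R n N y
            = (∑ i ∈ Finset.range (N+4), Q i N x * T i n) * R n N y := by
          rw [Finset.sum_mul]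
        have e2 : ∑ j ∈ Finset.range (N+4), Q n N x * T n j * R j N y
            = Q n N x * (∑ j ∈ Finset.range (N+4), T n j * R j N y) := by
          rw [Finset.mul_sum]
          refine Finset.sum_congr rfl (fun j _ => ?_)
          ring
        rw [e1, e2, hQrec n hn', hRrec n hn']
        ring
      rw [Finset.mul_sum, Finset.sum_congr rfl h1, Finset.sum_sub_distrib, Finset.sum_comm]
    rw [step1, hsplit (fun i => ∑ n ∈ Finset.range (N+1), Q i N x * T i n * R n N y)]
    have hin : ∀ n ∈ Finset.range (N+1),
        (∑ j ∈ Finset.range (N+4), Q n N x * T n j * R j N y)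
        = (∑ j ∈ Finset.range (N+1), Q n N x * T n j * R j N y)
          + Q n N x * T n (N+1) * R (N+1) N y + Q n N x * T n (N+2) * R (N+2) N y
          + Q n N x * T n (N+3) * R (N+3) N y :=
      fun n _ => hsplit (fun j => Q n N x * T n j * R j N y)
    rw [Finset.sum_congr rfl hin]
    rw [Finset.sum_add_distrib, Finset.sum_add_distrib, Finset.sum_add_distrib]
    -- evaluate boundary pieces
    have z1 : ∑ n ∈ Finset.range (N+1), Q (N+1) N x * T (N+1) n * R n N y = 0 :=
      Finset.sum_eq_zero (fun n _ => by rw [hQz1]; ring)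
    have z2 : ∑ n ∈ Finset.range (N+1), Q (N+2) N x * T (N+2) n * R n N y = 0 :=
      Finset.sum_eq_zero (fun n _ => by rw [hQz2]; ring)
    have z3 : ∑ n ∈ Finset.range (N+1), Q (N+3) N x * T (N+3) n * R n N y
        = Q (N+3) N x * T (N+3) N * R N N y := by
      rw [Finset.sum_eq_single_of_mem N (Finset.self_mem_range_succ N)]
      intro n hn hne
      rw [Finset.mem_range] at hn
      rw [hband (N+3) n (Or.inl (by omega))]
      ring
    have z4 : ∑ n ∈ Finset.range (N+1), Q n N x * T n (N+1) * R (N+1) N y = 0 :=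
      Finset.sum_eq_zero (fun n _ => by rw [hRz1]; ring)
    have z5 : ∑ n ∈ Finset.range (N+1), Q n N x * T n (N+2) * R (N+2) N y
        = Q N N x * T N (N+2) * R (N+2) N y := by
      rw [Finset.sum_eq_single_of_mem N (Finset.self_mem_range_succ N)]
      intro n hn hne
      rw [Finset.mem_range] at hn
      rw [hband n (N+2) (Or.inr (by omega))]
      ring
    have z6 : ∑ n ∈ Finset.range (N+1), Q n N x * T n (N+3) * R (N+3) N y = 0 :=
      Finset.sum_eq_zero (fun n hn => by
        rw [Finset.mem_range] at hn
        rw [hband n (N+3) (Or.inr (by omega))]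
        ring)
    rw [z1, z2, z3, z4, z5, z6]
    ring
  -- nonvanishing
  have hα0 : α N ≠ 0 := by
    rw [hα]
    exact Finset.prod_ne_zero_iff.mpr (fun k _ => (hext k).1)
  have hβ0 : β N ≠ 0 := by
    rw [hβ]
    exact mul_ne_zero (pow_ne_zero _ (by norm_num)) 
      (Finset.prod_ne_zero_iff.mpr (fun k _ => (hext k).2))
  have hxy' : x - y ≠ 0 := sub_ne_zero.mpr hxy
  have hαs : α (N+1) = α N * T (N+3) N := by
    rw [hα, hα, Finset.prod_range_succ]
  have hβs : β (N+1) = -(β N * T N (N+2)) := by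
    rw [hβ, hβ, Finset.prod_range_succ, pow_succ]
    ring
  -- final assembly
  rw [hPA (N+1), hPA N, hPB (N+1), hPB N, hαs, hβs]
  rw [hQ3, hR2] at key
  field_simp
  linear_combination key
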